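/- For every ideal I ⊆ R = ℂ[x_1,…,x_N] and every d ∈ ℕ, the eliminating truncated dual space of the quotient ideal satisfies E_0^d[I : ⟨x_1⟩, {x_1}] = x_1·E_0^{d+1}[I, {x_1}] := {x_1·q : q ∈ E_0^{d+1}[I, {x_1}]}, where I : ⟨x_1⟩ = {f ∈ R : x_1 f ∈ I}. -/

import Mathlib

open MvPolynomial

noncomputable section

/-- The polynomial ring `R = ℂ[x_1,…,x_N]`, with variables indexed by `Fin N`. -/
abbrev PolyR (N : ℕ) := MvPolynomial (Fin N) ℂ

/-- A dual functional `q = Σ_α c_α ∂^α` is encoded by its coefficient vector, i.e.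
by an element of `MvPolynomial (Fin N) ℂ` (which is exactly the space of finitely
supported functions `ℕ^N →₀ ℂ`).  Its application to a polynomial `f` is
`q(f) = Σ_α c_α · (coefficient of x^α in f)`. -/
def dapply {N : ℕ} (q f : PolyR N) : ℂ := ∑ α ∈ f.support, q.coeff α * f.coeff α

/-- The Macaulay dual space `D_0[I]` of an ideal `I`, as a `ℂ`-subspace of `D_0`. -/
def dualSpace {N : ℕ} (I : Ideal (PolyR N)) : Submodule ℂ (PolyR N) where
  carrier := {q | ∀ f ∈ I, dapply q f = 0}
  zero_mem' := by intro f _; simp [dapply]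
  add_mem' := by
    intro a b ha hb f hf
    have h : dapply (a + b) f = dapply a f + dapply b f := by
      simp [dapply, MvPolynomial.coeff_add, add_mul, Finset.sum_add_distrib]
    rw [h, ha f hf, hb f hf, add_zero]
  smul_mem' := by
    intro c q hq f hf
    have h : dapply (c • q) f = c * dapply q f := by
      simp [dapply, MvPolynomial.coeff_smul, Finset.mul_sum, mul_assoc]
    rw [h, hq f hf, mul_zero]

/-- The subspace of dual functionals all of whose exponents satisfy `P`. -/
def expSupported {N : ℕ} (P : (Fin N →₀ ℕ) → Prop) : Submodule ℂ (PolyR N) where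
  carrier := {q | ∀ α ∈ q.support, P α}
  zero_mem' := by simp
  add_mem' := by
    intro a b ha hb α hα
    rcases Finset.mem_union.mp (MvPolynomial.support_add hα) with h | h
    · exact ha α h
    · exact hb α h
  smul_mem' := by
    intro c q hq α hα
    exact hq α (MvPolynomial.support_smul hα)

/-- The truncated dual space `D_0^k[I]`: functionals in `D_0[I]` of order at most `k`
(in particular `0` belongs to it). -/
def truncDual {N : ℕ} (I : Ideal (PolyR N)) (k : ℕ) : Submodule ℂ (PolyR N) :=
  dualSpace I ⊓ expSupported (fun α => ∑ i, α i ≤ k)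

/-- The eliminating truncated dual space `E_0^d[I, A]`, where the set of variables `A`
is given by a finite set of indices: functionals in `D_0[I]` with `ord_A ≤ d`. -/
def elimDual {N : ℕ} (I : Ideal (PolyR N)) (A : Finset (Fin N)) (d : ℕ) :
    Submodule ℂ (PolyR N) :=
  dualSpace I ⊓ expSupported (fun α => ∑ i ∈ A, α i ≤ d)

open scoped Classical in
/-- The action `g · q` of the polynomial ring on dual functionals, determined by
`(g·q)(f) = q(g·f)`; concretely `g · ∂^α = Σ_{γ ≤ α} g_γ ∂^{α-γ}`. -/
def dmul {N : ℕ} (g q : PolyR N) : PolyR N :=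
  ∑ γ ∈ g.support, ∑ α ∈ q.support,
    if γ ≤ α then (MvPolynomial.monomial (α - γ)) (g.coeff γ * q.coeff α) else 0

/-- The maximal ideal `m = ⟨x_1,…,x_N⟩` of the origin. -/
def mIdeal (N : ℕ) : Ideal (PolyR N) := Ideal.span (Set.range MvPolynomial.X)

/-- The multiplicative set of polynomials not vanishing at the origin. -/
def atOrigin (N : ℕ) : Submonoid (PolyR N) where
  carrier := {g | MvPolynomial.constantCoeff g ≠ 0}
  one_mem' := by simp
  mul_mem' := by
    intro a b ha hb
    simp only [Set.mem_setOf_eq, map_mul]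
    exact mul_ne_zero ha hb

/-- The local ring `R_0` of the origin: the localization of `R` at the maximal ideal
of the origin. -/
abbrev LocR (N : ℕ) := Localization (atOrigin N)

/-- The extension `I·R_0` of an ideal `I ⊆ R` to the local ring of the origin. -/
def extIdeal {N : ℕ} (I : Ideal (PolyR N)) : Ideal (LocR N) :=
  Ideal.map (algebraMap (PolyR N) (LocR N)) I

/-- The contraction `I·R_0 ∩ R` of the extension of `I` back to `R`. -/
def contExt {N : ℕ} (I : Ideal (PolyR N)) : Ideal (PolyR N) :=
  Ideal.comap (algebraMap (PolyR N) (LocR N)) (extIdeal I)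

/-- The local Hilbert function
`H_I(k) = dim_ℂ R/(I + m^{k+1}) − dim_ℂ R/(I + m^k)`
(note that for `k = 0` the subtrahend vanishes since `m^0 = R`). -/
def hilb {N : ℕ} (I : Ideal (PolyR N)) (k : ℕ) : ℕ :=
  Module.finrank ℂ (PolyR N ⧸ (I + mIdeal N ^ (k + 1)))
    - Module.finrank ℂ (PolyR N ⧸ (I + mIdeal N ^ k))


namespace Stmt16

open MvPolynomial

variable {N : ℕ}

lemma dapply_eq_sum_of_subset (q f : PolyR N) {s : Finset (Fin N →₀ ℕ)}
    (hs : f.support ⊆ s) : dapply q f = ∑ α ∈ s, q.coeff α * f.coeff α := by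
  rw [dapply]
  apply Finset.sum_subset hs
  intro x _ hx
  rw [MvPolynomial.notMem_support_iff.mp hx, mul_zero]

/-- `dapply q` as a linear map in the second argument. -/
def dapplyL (q : PolyR N) : PolyR N →ₗ[ℂ] ℂ where
  toFun f := dapply q f
  map_add' f g := by
    classical
    show dapply q (f + g) = dapply q f + dapply q g
    rw [dapply_eq_sum_of_subset q (f + g) (MvPolynomial.support_add),
        dapply_eq_sum_of_subset q f Finset.subset_union_left,
        dapply_eq_sum_of_subset q g Finset.subset_union_right, ← Finset.sum_add_distrib]
    refine Finset.sum_congr rfl fun α _ => ?_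
    rw [MvPolynomial.coeff_add, mul_add]
  map_smul' c f := by
    simp only [RingHom.id_apply, smul_eq_mul]
    show dapply q (c • f) = c * dapply q f
    rw [dapply_eq_sum_of_subset q (c • f) (MvPolynomial.support_smul), dapply,
      Finset.mul_sum]
    refine Finset.sum_congr rfl fun α _ => ?_
    rw [MvPolynomial.coeff_smul]
    simp only [smul_eq_mul, RingHom.id_apply]
    ring

lemma dapplyL_apply (q f : PolyR N) : dapplyL q f = dapply q f := rfl

lemma coeff_dmul_X (i0 : Fin N) (q : PolyR N) (β : Fin N →₀ ℕ) :
    (dmul (X i0) q).coeff β = q.coeff (β + Finsupp.single i0 1) := by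
  classical
  rw [dmul, support_X, Finset.sum_singleton, MvPolynomial.coeff_sum]
  have h : ∀ α ∈ q.support,
      MvPolynomial.coeff β (if Finsupp.single i0 1 ≤ α then
        (MvPolynomial.monomial (α - Finsupp.single i0 1))
          ((X i0 : PolyR N).coeff (Finsupp.single i0 1) * q.coeff α) else 0)
      = if α = β + Finsupp.single i0 1 then q.coeff α else 0 := by
    intro α _
    rw [MvPolynomial.coeff_X, if_pos rfl]
    split_ifs with h1 h2 h2
    · rw [MvPolynomial.coeff_monomial, if_pos, one_mul]
      rw [h2, add_tsub_cancel_right]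
    · rw [MvPolynomial.coeff_monomial, if_neg]
      intro hc
      exact h2 (by rw [← hc, tsub_add_cancel_of_le h1])
    · exact absurd (h2 ▸ le_add_self) h1
    · rw [MvPolynomial.coeff_zero]
  rw [Finset.sum_congr rfl h,
    Finset.sum_ite_eq' q.support (β + Finsupp.single i0 1) (fun α => q.coeff α)]
  split_ifs with hmem
  · rfl
  · exact (MvPolynomial.notMem_support_iff.mp hmem).symm

lemma dapply_dmul_X (i0 : Fin N) (q f : PolyR N) :
    dapply (dmul (X i0) q) f = dapply q (X i0 * f) := by
  rw [dapply, dapply, support_X_mul, Finset.sum_map]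
  refine Finset.sum_congr rfl fun β _ => ?_
  rw [addLeftEmbedding_apply, coeff_dmul_X, MvPolynomial.coeff_X_mul, add_comm]

lemma dapply_X_mul_X_mul (i0 : Fin N) (p g : PolyR N) :
    dapply (X i0 * p) (X i0 * g) = dapply p g := by
  rw [dapply, dapply, support_X_mul, Finset.sum_map]
  refine Finset.sum_congr rfl fun β _ => ?_
  rw [addLeftEmbedding_apply, MvPolynomial.coeff_X_mul, MvPolynomial.coeff_X_mul]

/-- The "set `x₁` exponent to 0" truncation: keeps only monomials with `α i0 = 0`. -/
noncomputable def pz (i0 : Fin N) (f : PolyR N) : PolyR N :=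
  ∑ v ∈ f.support, if v i0 = 0 then MvPolynomial.monomial v (f.coeff v) else 0

lemma coeff_pz (i0 : Fin N) (f : PolyR N) (β : Fin N →₀ ℕ) :
    (pz i0 f).coeff β = if β i0 = 0 then f.coeff β else 0 := by
  classical
  rw [pz, MvPolynomial.coeff_sum]
  have h : ∀ v ∈ f.support,
      MvPolynomial.coeff β (if v i0 = 0 then MvPolynomial.monomial v (f.coeff v) else 0)
        = if v = β then (if β i0 = 0 then f.coeff β else 0) else 0 := by
    intro v _
    by_cases hv : v = β
    · subst hv
      rw [if_pos rfl]
      split_ifs with h1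
      · rw [MvPolynomial.coeff_monomial, if_pos rfl]
      · rw [MvPolynomial.coeff_zero]
    · rw [if_neg hv]
      split_ifs with h1
      · rw [MvPolynomial.coeff_monomial, if_neg hv]
      · rw [MvPolynomial.coeff_zero]
  rw [Finset.sum_congr rfl h, Finset.sum_ite_eq' f.support β]
  split_ifs with hmem h1 h1
  · rfl
  · rfl
  · exact (MvPolynomial.notMem_support_iff.mp hmem).symm
  · rfl

lemma exists_X_mul (i0 : Fin N) (f : PolyR N) (h : ∀ β ∈ f.support, β i0 ≠ 0) :
    ∃ g, f = X i0 * g := by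
  refine ⟨∑ v ∈ f.support, MvPolynomial.monomial (v - Finsupp.single i0 1) (f.coeff v), ?_⟩
  rw [Finset.mul_sum]
  conv_lhs => rw [MvPolynomial.as_sum f]
  refine Finset.sum_congr rfl fun v hv => ?_
  have h1 : Finsupp.single i0 1 ≤ v :=
    Finsupp.single_le_iff.mpr (Nat.one_le_iff_ne_zero.mpr (h v hv))
  rw [show (X i0 : PolyR N) = MvPolynomial.monomial (Finsupp.single i0 1) 1 by
      rw [← MvPolynomial.X_pow_eq_monomial, pow_one],
    MvPolynomial.monomial_mul, one_mul, add_tsub_cancel_of_le h1]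

/-- Total degree in the variables other than `i0`. -/
def dg (i0 : Fin N) (α : Fin N →₀ ℕ) : ℕ := ∑ i ∈ Finset.univ.erase i0, α i

lemma dg_add (i0 : Fin N) (a b : Fin N →₀ ℕ) : dg i0 (a + b) = dg i0 a + dg i0 b := by
  rw [dg, dg, dg, ← Finset.sum_add_distrib]
  exact Finset.sum_congr rfl fun i _ => Finsupp.add_apply a b i

/-- The ideal generated by the variables other than `i0`. -/
def nId (i0 : Fin N) : Ideal (PolyR N) := Ideal.span {g | ∃ i, i ≠ i0 ∧ g = X i}

/-- The ideal of polynomials all of whose monomials have `dg i0`-degree at least `k`. -/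
def Mdeg (i0 : Fin N) (k : ℕ) : Ideal (PolyR N) where
  carrier := {f | ∀ α ∈ f.support, k ≤ dg i0 α}
  zero_mem' := by simp
  add_mem' := by
    classical
    intro a b ha hb α hα
    rcases Finset.mem_union.mp (MvPolynomial.support_add hα) with h | h
    · exact ha α h
    · exact hb α h
  smul_mem' := by
    classical
    intro c f hf α hα
    rw [smul_eq_mul] at hα
    obtain ⟨s, _, t, ht, rfl⟩ := Finset.mem_add.mp (MvPolynomial.support_mul c f hα)
    have := hf t ht
    rw [dg_add]
    omega

lemma nId_le_Mdeg_one (i0 : Fin N) : nId i0 ≤ Mdeg i0 1 := by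
  rw [nId, Ideal.span_le]
  rintro g ⟨i, hi, rfl⟩
  intro α hα
  rw [support_X, Finset.mem_singleton] at hα
  subst hα
  rw [dg, Finset.sum_eq_single_of_mem i (Finset.mem_erase.mpr ⟨hi, Finset.mem_univ i⟩)]
  · rw [Finsupp.single_apply, if_pos rfl]
  · intro j _ hj
    rw [Finsupp.single_apply, if_neg (fun hc => hj hc.symm)]

lemma nId_pow_le_Mdeg (i0 : Fin N) (k : ℕ) : nId i0 ^ k ≤ Mdeg i0 k := by
  induction k with
  | zero => intro f _ α _; exact Nat.zero_le _
  | succ k ih =>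
    rw [pow_succ]
    refine Ideal.mul_le.mpr fun a ha b hb => ?_
    intro α hα
    classical
    obtain ⟨s, hs, t, ht, rfl⟩ := Finset.mem_add.mp (MvPolynomial.support_mul a b hα)
    have h1 := ih ha s hs
    have h2 := nId_le_Mdeg_one i0 hb t ht
    rw [dg_add]
    omega

lemma monomial_mem_nId_pow (i0 : Fin N) :
    ∀ (k : ℕ) (α : Fin N →₀ ℕ) (c : ℂ), k ≤ dg i0 α →
      MvPolynomial.monomial α c ∈ nId i0 ^ k := by
  intro k
  induction k with
  | zero => intro α c _; rw [pow_zero, Ideal.one_eq_top]; exact Submodule.mem_top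
  | succ k ih =>
    intro α c hk
    have hex : ∃ i ∈ Finset.univ.erase i0, α i ≠ 0 := by
      by_contra hc
      push_neg at hc
      have : dg i0 α = 0 := Finset.sum_eq_zero hc
      omega
    obtain ⟨i, hi, hαi⟩ := hex
    have hle : Finsupp.single i 1 ≤ α :=
      Finsupp.single_le_iff.mpr (Nat.one_le_iff_ne_zero.mpr hαi)
    have hkey : dg i0 (α - Finsupp.single i 1) + 1 = dg i0 α := by
      rw [dg, dg, ← Finset.sum_erase_add _ _ hi, ← Finset.sum_erase_add _ (fun j => α j) hi,
        add_assoc]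
      congr 1
      · refine Finset.sum_congr rfl fun j hj => ?_
        rw [Finsupp.tsub_apply, Finsupp.single_apply,
          if_neg (fun hc => (Finset.mem_erase.mp hj).1 hc.symm), Nat.sub_zero]
      · rw [Finsupp.tsub_apply, Finsupp.single_apply, if_pos rfl]
        have : 1 ≤ α i := Nat.one_le_iff_ne_zero.mpr hαi
        omega
    have heq : MvPolynomial.monomial α c
        = MvPolynomial.monomial (α - Finsupp.single i 1) c * X i := by
      rw [show (X i : PolyR N) = MvPolynomial.monomial (Finsupp.single i 1) 1 by
          rw [← MvPolynomial.X_pow_eq_monomial, pow_one],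
        MvPolynomial.monomial_mul, mul_one, tsub_add_cancel_of_le hle]
    rw [heq, pow_succ]
    refine Ideal.mul_mem_mul (ih _ c ?_) ?_
    · omega
    · exact Ideal.subset_span ⟨i, (Finset.mem_erase.mp hi).1, rfl⟩

lemma mem_nId_pow_of_support (i0 : Fin N) (k : ℕ) (f : PolyR N)
    (h : ∀ α ∈ f.support, k ≤ dg i0 α) : f ∈ nId i0 ^ k := by
  have hmem := Submodule.sum_mem (nId i0 ^ k) (t := f.support)
    (fun v hv => monomial_mem_nId_pow i0 k v (f.coeff v) (h v hv))
  rwa [← MvPolynomial.as_sum f] at hmem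

lemma exists_factor {E W : Type*} [AddCommGroup E] [Module ℂ E] [AddCommGroup W]
    [Module ℂ W] (L : E →ₗ[ℂ] W) (T : E →ₗ[ℂ] ℂ)
    (h : LinearMap.ker L ≤ LinearMap.ker T) :
    ∃ ψ : W →ₗ[ℂ] ℂ, ∀ x, ψ (L x) = T x := by
  obtain ⟨ψ, hψ⟩ := LinearMap.exists_extend
    (((LinearMap.ker L).liftQ T h).comp L.quotKerEquivRange.symm.toLinearMap)
  refine ⟨ψ, fun x => ?_⟩
  have h1 : (⟨L x, LinearMap.mem_range_self L x⟩ : LinearMap.range L)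
      = L.quotKerEquivRange (Submodule.Quotient.mk x) :=
    Subtype.ext (LinearMap.quotKerEquivRange_apply_mk L x).symm
  have h2 := LinearMap.congr_fun hψ ⟨L x, LinearMap.mem_range_self L x⟩
  simp only [LinearMap.comp_apply, Submodule.subtype_apply] at h2
  rw [h2, h1, LinearEquiv.coe_coe, LinearEquiv.symm_apply_apply, Submodule.liftQ_apply]

end Stmt16

open Stmt16

set_option maxHeartbeats 1000000 in
set_option synthInstance.maxHeartbeats 400000 in
/-- For every ideal `I ⊆ R` and every `d ∈ ℕ`,
`E_0^d[I : ⟨x_1⟩, {x_1}] = x_1 · E_0^{d+1}[I, {x_1}]`. -/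
theorem statement16 {N : ℕ} (hN : 0 < N) (I : Ideal (PolyR N)) (d : ℕ) :
    (elimDual (Submodule.colon I ((Ideal.span {MvPolynomial.X (⟨0, hN⟩ : Fin N)} : Ideal (PolyR N)) : Set (PolyR N)))
        {(⟨0, hN⟩ : Fin N)} d : Set (PolyR N))
      = (fun q : PolyR N => dmul (MvPolynomial.X (⟨0, hN⟩ : Fin N)) q) ''
          (elimDual I {(⟨0, hN⟩ : Fin N)} (d + 1) : Set (PolyR N)) := by
  classical
  set i0 : Fin N := ⟨0, hN⟩ with hi0
  ext p
  simp only [Set.mem_image, SetLike.mem_coe]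
  constructor
  · -- hard direction: p ∈ E^d[I : ⟨x⟩] ⇒ p = x·q for some q ∈ E^{d+1}[I]
    intro hp
    obtain ⟨hp1, hp2⟩ := Submodule.mem_inf.mp hp
    have hpdual : ∀ f ∈ Submodule.colon I ((Ideal.span {X i0} : Ideal (PolyR N)) : Set (PolyR N)), dapply p f = 0 := hp1
    have hpord : ∀ α ∈ p.support, α i0 ≤ d := by
      intro α hα
      have := hp2 α hα
      simpa using this
    set J : Ideal (PolyR N) := I ⊔ Ideal.span {X i0 ^ (d + 2)} with hJ
    set u : PolyR N := X i0 * p with hu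
    -- Step A : p vanishes on J : ⟨x⟩
    have stepA : ∀ g : PolyR N, X i0 * g ∈ J → dapply p g = 0 := by
      intro g hg
      rw [hJ] at hg
      obtain ⟨a, ha, b, hb, hab⟩ := Submodule.mem_sup.mp hg
      obtain ⟨h, rfl⟩ := Ideal.mem_span_singleton.mp hb
      have hIg : X i0 * (g - X i0 ^ (d + 1) * h) = a := by
        linear_combination -hab
      have hcolon : g - X i0 ^ (d + 1) * h ∈ Submodule.colon I ((Ideal.span {X i0} : Ideal (PolyR N)) : Set (PolyR N)) := by
        rw [Submodule.mem_colon]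
        intro z hz
        obtain ⟨w, rfl⟩ := Ideal.mem_span_singleton.mp hz
        have hzz : (g - X i0 ^ (d + 1) * h) • (X i0 * w) = w * a := by
          rw [smul_eq_mul, ← hIg]; ring
        rw [hzz]
        exact Ideal.mul_mem_left _ _ ha
      have h1 : dapply p (g - X i0 ^ (d + 1) * h) = 0 := hpdual _ hcolon
      have h2 : dapply p (X i0 ^ (d + 1) * h) = 0 := by
        rw [dapply]
        refine Finset.sum_eq_zero fun α hα => ?_
        have hmem := MvPolynomial.mem_support_iff.mp hα
        rw [MvPolynomial.X_pow_eq_monomial, MvPolynomial.coeff_monomial_mul'] at hmem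
        by_cases hle : Finsupp.single i0 (d + 1) ≤ α
        · have hd1 : d + 1 ≤ α i0 := Finsupp.single_le_iff.mp hle
          have : p.coeff α = 0 := by
            by_contra hne
            have := hpord α (MvPolynomial.mem_support_iff.mpr hne)
            omega
          rw [this, zero_mul]
        · rw [if_neg hle] at hmem
          exact absurd rfl hmem
      have hsplit : dapply p g
          = dapply p (g - X i0 ^ (d + 1) * h) + dapply p (X i0 ^ (d + 1) * h) := by
        have h3 := map_add (dapplyL p) (g - X i0 ^ (d + 1) * h) (X i0 ^ (d + 1) * h)
        rw [sub_add_cancel] at h3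
        exact h3
      rw [hsplit, h1, h2, add_zero]
    have hXkill : ∀ g : PolyR N, X i0 * g ∈ J → dapply u (X i0 * g) = 0 := by
      intro g hg
      rw [hu, dapply_X_mul_X_mul]
      exact stepA g hg
    set D : ℕ := u.support.sup (dg i0) with hD
    have stepB : ∀ w : PolyR N, (∀ α ∈ w.support, D + 1 ≤ dg i0 α) → dapply u w = 0 := by
      intro w hw
      rw [dapply]
      refine Finset.sum_eq_zero fun α hα => ?_
      have h1 : u.coeff α = 0 := by
        by_contra hne
        have h2 := Finset.le_sup (f := dg i0) (MvPolynomial.mem_support_iff.mpr hne)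
        have h3 := hw α hα
        omega
      rw [h1, zero_mul]
    -- Artin-Rees in the quotient by x₁
    set π : PolyR N →+* PolyR N ⧸ (Ideal.span {X i0} : Ideal (PolyR N)) :=
      Ideal.Quotient.mk (Ideal.span {X i0}) with hπ
    obtain ⟨c, hARc⟩ := Ideal.exists_pow_inf_eq_pow_smul (Ideal.map π (nId i0))
      (Ideal.map π J : Ideal (PolyR N ⧸ (Ideal.span {X i0} : Ideal (PolyR N))))
    set K : ℕ := c + (D + 1) with hK
    have hAR := hARc K (by omega)
    have hKc : K - c = D + 1 := by omega
    rw [hKc] at hAR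
    simp only [Ideal.smul_eq_mul, Ideal.mul_top] at hAR
    have hARle : Ideal.map π (nId i0) ^ K ⊓ Ideal.map π J
        ≤ Ideal.map π (nId i0 ^ (D + 1) * J) := by
      rw [Ideal.map_mul, Ideal.map_pow, hAR]
      exact Ideal.mul_mono_right inf_le_right
    have stepE : ∀ j ∈ J, (∀ α ∈ (pz i0 j).support, K ≤ dg i0 α) → dapply u j = 0 := by
      intro j hj hjsup
      have h1 : pz i0 j ∈ nId i0 ^ K := mem_nId_pow_of_support i0 K _ hjsup
      have h2 : π j = π (pz i0 j) := by
        rw [hπ, Ideal.Quotient.eq]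
        have hsup : ∀ β ∈ (j - pz i0 j).support, β i0 ≠ 0 := by
          intro β hβ hβ0
          have hco := MvPolynomial.mem_support_iff.mp hβ
          rw [MvPolynomial.coeff_sub, coeff_pz, if_pos hβ0, sub_self] at hco
          exact hco rfl
        obtain ⟨g, hg⟩ := exists_X_mul i0 (j - pz i0 j) hsup
        rw [hg]
        exact Ideal.mem_span_singleton.mpr ⟨g, rfl⟩
      have h3 : π j ∈ Ideal.map π (nId i0) ^ K ⊓ Ideal.map π J := by
        refine Submodule.mem_inf.mpr ⟨?_, Ideal.mem_map_of_mem π hj⟩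
        rw [h2, ← Ideal.map_pow]
        exact Ideal.mem_map_of_mem π h1
      have h4 := hARle h3
      obtain ⟨w, hw, hwj⟩ :=
        (Ideal.mem_map_iff_of_surjective π Ideal.Quotient.mk_surjective).mp h4
      have h5 : j - w ∈ Ideal.span {X i0} := by
        have := Ideal.Quotient.eq.mp hwj
        have h6 : j - w = -(w - j) := by ring
        rw [h6]
        exact Submodule.neg_mem _ this
      obtain ⟨g, hg⟩ := Ideal.mem_span_singleton.mp h5
      have hwJ : w ∈ J := Ideal.mul_le_right hw
      have hXgJ : X i0 * g ∈ J := by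
        rw [← hg]
        exact Submodule.sub_mem J hj hwJ
      have h6 : dapply u (X i0 * g) = 0 := hXkill g hXgJ
      have h7 : dapply u w = 0 := by
        refine stepB w fun α hα => ?_
        exact nId_pow_le_Mdeg i0 (D + 1) (Ideal.mul_le_left hw) α hα
      have hj' : j = w + X i0 * g := by rw [← hg]; ring
      have h8 : dapply u j = dapply u w + dapply u (X i0 * g) := by
        have := map_add (dapplyL u) w (X i0 * g)
        rw [← hj'] at this
        exact this
      rw [h8, h6, h7, add_zero]
    -- the finite exponent set F
    set B : Fin N →₀ ℕ := Finsupp.equivFunOnFinite.symm (fun _ => K) with hB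
    set Ffin : Finset (Fin N →₀ ℕ)
      := (Finset.Iic B).filter (fun α => α i0 = 0 ∧ dg i0 α < K) with hF
    have hFmem : ∀ α : Fin N →₀ ℕ, α ∈ Ffin ↔ (α i0 = 0 ∧ dg i0 α < K) := by
      intro α
      rw [hF, Finset.mem_filter, Finset.mem_Iic]
      constructor
      · exact fun h => h.2
      · intro h
        refine ⟨Finsupp.le_def.mpr fun i => ?_, h⟩
        have hBi : B i = K := rfl
        rw [hBi]
        by_cases hi : i = i0
        · rw [hi, h.1]; omega
        · have h2 : α i ≤ dg i0 α :=
            Finset.single_le_sum (f := fun j => α j) (fun j _ => Nat.zero_le _)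
              (Finset.mem_erase.mpr ⟨hi, Finset.mem_univ i⟩)
          omega
    -- the projection onto monomials in F
    set projF : PolyR N →ₗ[ℂ] PolyR N
      := ∑ α ∈ Ffin, (MvPolynomial.monomial α).comp (MvPolynomial.lcoeff ℂ α) with hproj
    have hprojF : ∀ f : PolyR N, projF f = ∑ α ∈ Ffin, MvPolynomial.monomial α (f.coeff α) := by
      intro f
      rw [hproj, LinearMap.sum_apply]
      exact Finset.sum_congr rfl fun α _ => rfl
    have coeff_projF : ∀ (f : PolyR N) β, (projF f).coeff β
        = if β ∈ Ffin then f.coeff β else 0 := by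
      intro f β
      rw [hprojF, MvPolynomial.coeff_sum]
      rw [Finset.sum_congr rfl fun α (_ : α ∈ Ffin) => MvPolynomial.coeff_monomial β α (f.coeff α)]
      exact Finset.sum_ite_eq' Ffin β fun α => f.coeff α
    -- factor the functional through projF
    set Jc : Submodule ℂ (PolyR N) := Submodule.restrictScalars ℂ J with hJc
    set L : Jc →ₗ[ℂ] PolyR N := projF.comp Jc.subtype with hL
    set T : Jc →ₗ[ℂ] ℂ := (-(dapplyL u)).comp Jc.subtype with hT
    have hker : LinearMap.ker L ≤ LinearMap.ker T := by
      rintro ⟨j, hjm⟩ hjk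
      have hjk' : projF j = 0 := hjk
      have hjJ : j ∈ J := hjm
      have hu0 : dapply u j = 0 := by
        refine stepE j hjJ fun α hα => ?_
        have hco := MvPolynomial.mem_support_iff.mp hα
        rw [coeff_pz] at hco
        by_cases hα0 : α i0 = 0
        · rw [if_pos hα0] at hco
          by_contra hlt
          have hmem : α ∈ Ffin := (hFmem α).mpr ⟨hα0, by omega⟩
          have := coeff_projF j α
          rw [hjk', if_pos hmem, MvPolynomial.coeff_zero] at this
          exact hco this.symm
        · rw [if_neg hα0] at hco
          exact absurd rfl hco
      show T ⟨j, hjm⟩ = 0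
      rw [hT]
      simp only [LinearMap.comp_apply, Submodule.subtype_apply, LinearMap.neg_apply]
      rw [dapplyL_apply, hu0, neg_zero]
    obtain ⟨ψ, hψ⟩ := exists_factor L T hker
    set r : PolyR N := ∑ α ∈ Ffin, MvPolynomial.monomial α (ψ (MvPolynomial.monomial α 1))
      with hr
    have coeff_r : ∀ β, r.coeff β
        = if β ∈ Ffin then ψ (MvPolynomial.monomial β 1) else 0 := by
      intro β
      rw [hr, MvPolynomial.coeff_sum]
      rw [Finset.sum_congr rfl fun α (_ : α ∈ Ffin) =>
        MvPolynomial.coeff_monomial β α (ψ (MvPolynomial.monomial α 1))]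
      exact Finset.sum_ite_eq' Ffin β fun α => ψ (MvPolynomial.monomial α 1)
    have hrF : ∀ f : PolyR N, dapply r f = ψ (projF f) := by
      intro f
      have hLs : dapply r f = ∑ α ∈ Ffin, ψ (MvPolynomial.monomial α 1) * f.coeff α := by
        rw [dapply_eq_sum_of_subset r f (s := f.support ∪ Ffin) Finset.subset_union_left]
        rw [← Finset.sum_subset (Finset.subset_union_right : Ffin ⊆ f.support ∪ Ffin) ?_]
        · refine Finset.sum_congr rfl fun α hα => ?_
          rw [coeff_r, if_pos hα]
        · intro x _ hx
          rw [coeff_r, if_neg hx, zero_mul]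
      have hRs : ψ (projF f) = ∑ α ∈ Ffin, ψ (MvPolynomial.monomial α 1) * f.coeff α := by
        rw [hprojF, map_sum]
        refine Finset.sum_congr rfl fun α _ => ?_
        have hmono : (MvPolynomial.monomial α) (f.coeff α)
            = (f.coeff α) • (MvPolynomial.monomial α (1 : ℂ)) := by
          rw [MvPolynomial.smul_monomial, smul_eq_mul, mul_one]
        rw [hmono, map_smul, smul_eq_mul, mul_comm]
      rw [hLs, hRs]
    -- assemble q = u + r
    refine ⟨u + r, ?_, ?_⟩
    · refine Submodule.mem_inf.mpr ⟨?_, ?_⟩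
      · intro f hf
        have hfJ : f ∈ J := by
          rw [hJ]
          exact (le_sup_left : I ≤ I ⊔ Ideal.span {X i0 ^ (d + 2)}) hf
        have h1 : dapply (u + r) f = dapply u f + dapply r f := by
          rw [dapply, dapply, dapply, ← Finset.sum_add_distrib]
          refine Finset.sum_congr rfl fun α _ => ?_
          rw [MvPolynomial.coeff_add, add_mul]
        have h2 : dapply r f = ψ (projF f) := hrF f
        have h3 : ψ (projF f) = -dapply u f := by
          have h4 := hψ ⟨f, hfJ⟩
          rw [hT, hL] at h4
          simp only [LinearMap.comp_apply, Submodule.subtype_apply,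
            LinearMap.neg_apply] at h4
          rw [dapplyL_apply] at h4
          exact h4
        rw [h1, h2, h3, add_neg_cancel]
      · intro α hα
        show ∑ i ∈ {i0}, α i ≤ d + 1
        rw [Finset.sum_singleton]
        rcases Finset.mem_union.mp (MvPolynomial.support_add hα) with h | h
        · have hco := MvPolynomial.mem_support_iff.mp h
          rw [hu, MvPolynomial.coeff_X_mul'] at hco
          by_cases hi : i0 ∈ α.support
          · rw [if_pos hi] at hco
            have h1 := hpord _ (MvPolynomial.mem_support_iff.mpr hco)
            have h2 : (α - Finsupp.single i0 1 : Fin N →₀ ℕ) i0 = α i0 - 1 := by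
              rw [Finsupp.tsub_apply, Finsupp.single_apply, if_pos rfl]
            have h3 : α i0 ≠ 0 := Finsupp.mem_support_iff.mp hi
            omega
          · rw [if_neg hi] at hco
            exact absurd rfl hco
        · have hmem : α ∈ Ffin := by
            by_contra hnm
            have := coeff_r α
            rw [if_neg hnm] at this
            exact MvPolynomial.mem_support_iff.mp h this
          have := (hFmem α).mp hmem
          rw [this.1]
          omega
    · apply MvPolynomial.ext
      intro β
      rw [coeff_dmul_X, MvPolynomial.coeff_add]
      have h1 : u.coeff (β + Finsupp.single i0 1) = p.coeff β := by
        rw [hu, add_comm, MvPolynomial.coeff_X_mul]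
      have h2 : r.coeff (β + Finsupp.single i0 1) = 0 := by
        rw [coeff_r, if_neg]
        intro hmem
        have h3 := ((hFmem _).mp hmem).1
        rw [Finsupp.add_apply, Finsupp.single_apply, if_pos rfl] at h3
        omega
      rw [h1, h2, add_zero]
  · -- easy direction
    rintro ⟨q, hq, rfl⟩
    obtain ⟨hq1, hq2⟩ := Submodule.mem_inf.mp hq
    refine Submodule.mem_inf.mpr ⟨?_, ?_⟩
    · intro f hf
      rw [dapply_dmul_X]
      apply hq1
      have h1 := Submodule.mem_colon.mp hf (X i0)
        (Ideal.mem_span_singleton.mpr dvd_rfl)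
      rw [smul_eq_mul, mul_comm] at h1
      exact h1
    · intro α hα
      show ∑ i ∈ {i0}, α i ≤ d
      rw [Finset.sum_singleton]
      have h1 : (dmul (X i0) q).coeff α ≠ 0 := MvPolynomial.mem_support_iff.mp hα
      rw [coeff_dmul_X] at h1
      have h2 : ∑ i ∈ ({i0} : Finset (Fin N)), (α + Finsupp.single i0 1 : Fin N →₀ ℕ) i ≤ d + 1 :=
        hq2 _ (MvPolynomial.mem_support_iff.mpr h1)
      rw [Finset.sum_singleton] at h2
      have h3 : (α + Finsupp.single i0 1 : Fin N →₀ ℕ) i0 = α i0 + 1 := by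
        rw [Finsupp.add_apply, Finsupp.single_apply, if_pos rfl]
      omega
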